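/- Fix a real number r. For a nonzero quaternion a let q(a) = cos(r·log‖a‖) + sin(r·log‖a‖)·i ∈ ℍ (the image in ℍ of the complex number ‖a‖^{ir}), and define the Kalscheuer multiplication by a ∘ x = a · q(a)⁻¹ · x · q(a) for a ≠ 0, and 0 ∘ x = 0. Then ∘ is associative: for all quaternions a, b, x one has a ∘ (b ∘ x) = (a ∘ b) ∘ x. -/

import Mathlib

open Quaternion
open scoped Classical

/-- The unit quaternion `‖a‖^{ir} = cos(r·log‖a‖) + sin(r·log‖a‖)·i`. -/
noncomputable def kalscheuerUnit (r : ℝ) (a : Quaternion ℝ) : Quaternion ℝ :=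
  ⟨Real.cos (r * Real.log ‖a‖), Real.sin (r * Real.log ‖a‖), 0, 0⟩

/-- The Kalscheuer nearfield multiplication `a ∘ x = a · q(a)⁻¹ · x · q(a)`
(for `a ≠ 0`, and `0 ∘ x = 0`), where `q(a) = ‖a‖^{ir}`. -/
noncomputable def kalscheuerMul (r : ℝ) (a x : Quaternion ℝ) : Quaternion ℝ :=
  if a = 0 then 0 else a * (kalscheuerUnit r a)⁻¹ * x * kalscheuerUnit r a

lemma kalscheuerUnit_re (r : ℝ) (a : Quaternion ℝ) :
    (kalscheuerUnit r a).re = Real.cos (r * Real.log ‖a‖) := rfl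

lemma kalscheuerUnit_imI (r : ℝ) (a : Quaternion ℝ) :
    (kalscheuerUnit r a).imI = Real.sin (r * Real.log ‖a‖) := rfl

lemma kalscheuerUnit_imJ (r : ℝ) (a : Quaternion ℝ) : (kalscheuerUnit r a).imJ = 0 := rfl

lemma kalscheuerUnit_imK (r : ℝ) (a : Quaternion ℝ) : (kalscheuerUnit r a).imK = 0 := rfl

lemma kalscheuerUnit_normSq (r : ℝ) (a : Quaternion ℝ) :
    Quaternion.normSq (kalscheuerUnit r a) = 1 := by
  rw [Quaternion.normSq_def']
  simp [kalscheuerUnit_re, kalscheuerUnit_imI, kalscheuerUnit_imJ, kalscheuerUnit_imK]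

lemma kalscheuerUnit_ne_zero (r : ℝ) (a : Quaternion ℝ) : kalscheuerUnit r a ≠ 0 := by
  intro h
  have := kalscheuerUnit_normSq r a
  rw [h] at this
  simp at this

lemma kalscheuerUnit_norm (r : ℝ) (a : Quaternion ℝ) : ‖kalscheuerUnit r a‖ = 1 := by
  have h := kalscheuerUnit_normSq r a
  rw [Quaternion.normSq_eq_norm_mul_self] at h
  nlinarith [norm_nonneg (kalscheuerUnit r a)]

lemma kalscheuerUnit_mul (r : ℝ) (a b : Quaternion ℝ) (ha : a ≠ 0) (hb : b ≠ 0) :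
    kalscheuerUnit r (a * b) = kalscheuerUnit r a * kalscheuerUnit r b := by
  have hlog : r * Real.log ‖a * b‖ = r * Real.log ‖a‖ + r * Real.log ‖b‖ := by
    rw [norm_mul, Real.log_mul (by simpa using ha) (by simpa using hb)]; ring
  ext <;>
    simp only [kalscheuerUnit_re, kalscheuerUnit_imI, kalscheuerUnit_imJ, kalscheuerUnit_imK,
      hlog] <;>
    simp [Quaternion.re_mul, Quaternion.imI_mul, Quaternion.imJ_mul, Quaternion.imK_mul,
      kalscheuerUnit_re, kalscheuerUnit_imI, kalscheuerUnit_imJ, kalscheuerUnit_imK, hlog,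
      Real.cos_add, Real.sin_add] <;> ring

lemma kalscheuerUnit_comm (r : ℝ) (a b : Quaternion ℝ) :
    kalscheuerUnit r a * kalscheuerUnit r b = kalscheuerUnit r b * kalscheuerUnit r a := by
  ext <;>
    simp [kalscheuerUnit_re, kalscheuerUnit_imI, kalscheuerUnit_imJ, kalscheuerUnit_imK,
      Quaternion.re_mul, Quaternion.imI_mul, Quaternion.imJ_mul,
      Quaternion.imK_mul] <;> ring

lemma kalscheuerMul_norm (r : ℝ) (a b : Quaternion ℝ) (ha : a ≠ 0) :
    ‖kalscheuerMul r a b‖ = ‖a * b‖ := by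
  rw [kalscheuerMul, if_neg ha]
  simp [norm_mul, norm_inv, kalscheuerUnit_norm]

/-- The multiplication of Kalscheuer's nearfield is associative. -/
theorem kalscheuerMul_assoc (r : ℝ) (a b x : Quaternion ℝ) :
    kalscheuerMul r a (kalscheuerMul r b x) = kalscheuerMul r (kalscheuerMul r a b) x := by
  by_cases ha : a = 0
  · simp [kalscheuerMul, ha]
  by_cases hb : b = 0
  · simp [kalscheuerMul, ha, hb]
  set qa := kalscheuerUnit r a with hqa_def
  set qb := kalscheuerUnit r b with hqb_def
  have hqa : qa ≠ 0 := kalscheuerUnit_ne_zero r a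
  have hqb : qb ≠ 0 := kalscheuerUnit_ne_zero r b
  have e1 : ∀ y, kalscheuerMul r a y = a * qa⁻¹ * y * qa := fun y => by
    rw [kalscheuerMul, if_neg ha]
  have e2 : ∀ y, kalscheuerMul r b y = b * qb⁻¹ * y * qb := fun y => by
    rw [kalscheuerMul, if_neg hb]
  have hab : kalscheuerMul r a b ≠ 0 := by
    rw [e1]
    exact mul_ne_zero (mul_ne_zero (mul_ne_zero ha (inv_ne_zero hqa)) hb) hqa
  have hunit : kalscheuerUnit r (kalscheuerMul r a b) = qa * qb := by
    have hn : ‖kalscheuerMul r a b‖ = ‖a * b‖ := kalscheuerMul_norm r a b ha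
    rw [show kalscheuerUnit r (kalscheuerMul r a b) = kalscheuerUnit r (a * b) by
      unfold kalscheuerUnit; rw [hn]]
    exact kalscheuerUnit_mul r a b ha hb
  have hR : kalscheuerMul r (kalscheuerMul r a b) x
      = kalscheuerMul r a b * (qa * qb)⁻¹ * x * (qa * qb) := by
    rw [kalscheuerMul, if_neg hab, hunit]
  rw [e2, e1, hR, e1, mul_inv_rev]
  have hcomm : qa * qb = qb * qa := kalscheuerUnit_comm r a b
  have hcomm' : qa * qb⁻¹ = qb⁻¹ * qa := (Commute.inv_right₀ hcomm).eq
  simp only [mul_assoc]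
  congr 2
  rw [← hcomm, ← mul_assoc qa qb⁻¹, hcomm', mul_assoc qb⁻¹ qa, ← mul_assoc qa qa⁻¹,
    mul_inv_cancel₀ hqa, one_mul]
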